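/- For any MinBudget instance (N, ⊴, c), the subschedule of a feasible schedule S restricted to an ideal J of ⊴ is a feasible schedule of (J, ⊴_J, c); moreover, if additionally every ideal of ⊴ contained in N \ J has non-negative cost, then the budget of this subschedule is at most b(S). -/

import Mathlib

open List

variable {ι : Type*} [DecidableEq ι]

/-- Total cost of a schedule (list of jobs). -/
def listCost (c : ι → ℝ) (S : List ι) : ℝ := (S.map c).sum

/-- Budget of a schedule: maximum cost of a prefix (the empty prefix has cost 0). -/
def listBudget (c : ι → ℝ) : List ι → ℝ
  | [] => 0
  | j :: t => max 0 (c j + listBudget c t)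

/-- Return of a schedule. -/
def listReturn (c : ι → ℝ) (S : List ι) : ℝ := listCost c S - listBudget c S

/-- `S` enumerates the finite job set `N` without repetition. -/
def IsScheduleOf (N : Finset ι) (S : List ι) : Prop :=
  S.Nodup ∧ ∀ j, j ∈ S ↔ j ∈ N

/-- `S` is a linear extension of the precedence relation `r` (restricted to its jobs). -/
def RespectsOrder (r : ι → ι → Prop) (S : List ι) : Prop :=
  ∀ i j, r i j → i ∈ S → j ∈ S → S.idxOf i ≤ S.idxOf j

/-- Minimum budget over all feasible schedules of the job set `X`. -/
noncomputable def setBudget (r : ι → ι → Prop) (c : ι → ℝ) (X : Finset ι) : ℝ :=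
  sInf {b | ∃ S : List ι, IsScheduleOf X S ∧ RespectsOrder r S ∧ listBudget c S = b}

/-- Total cost of a job set. -/
def setCost (c : ι → ℝ) (X : Finset ι) : ℝ := ∑ j ∈ X, c j

/-- Return of a job set. -/
noncomputable def setReturn (r : ι → ι → Prop) (c : ι → ℝ) (X : Finset ι) : ℝ :=
  setCost c X - setBudget r c X

/-- The cbr-preorder on job sets. -/
def cbrLE (r : ι → ι → Prop) (c : ι → ℝ) (X Y : Finset ι) : Prop :=
  (setCost c X < 0 ∧ 0 ≤ setCost c Y) ∨
  (setCost c X < 0 ∧ setCost c Y < 0 ∧ setBudget r c X < setBudget r c Y) ∨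
  (setCost c X < 0 ∧ setCost c Y < 0 ∧ setBudget r c X = setBudget r c Y ∧
    setReturn r c X ≤ setReturn r c Y) ∨
  (0 ≤ setCost c X ∧ 0 ≤ setCost c Y ∧ setReturn r c X ≤ setReturn r c Y)

/-- `J` is an ideal (downward-closed subset) of `r` restricted to `I`. -/
def IsIdealIn (r : ι → ι → Prop) (I J : Finset ι) : Prop :=
  J ⊆ I ∧ ∀ j ∈ J, ∀ i ∈ I, r i j → i ∈ J

/-- `F` is a filter (upward-closed subset) of `r` restricted to `I`. -/
def IsFilterIn (r : ι → ι → Prop) (I F : Finset ι) : Prop :=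
  F ⊆ I ∧ ∀ i ∈ F, ∀ j ∈ I, r i j → j ∈ F

/-- `I` is an interval of `r` on `N`: intersection of an ideal and a filter. -/
def IsIntervalIn (r : ι → ι → Prop) (N I : Finset ι) : Prop :=
  ∃ J F, IsIdealIn r N J ∧ IsFilterIn r N F ∧ I = J ∩ F

/-- An irreducible interval: every ideal of the restricted order is `⪰` the interval. -/
def IsIrreducibleIn (r : ι → ι → Prop) (c : ι → ℝ) (N I : Finset ι) : Prop :=
  IsIntervalIn r N I ∧ ∀ J, IsIdealIn r I J → cbrLE r c I J

/-- A schedule (given as blocks `SS`) in increasing irreducible structure. -/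
def IncIrrStructure (r : ι → ι → Prop) (c : ι → ℝ) (N : Finset ι)
    (SS : List (List ι)) : Prop :=
  IsScheduleOf N SS.flatten ∧ RespectsOrder r SS.flatten ∧
  (∀ S ∈ SS, IsIrreducibleIn r c N S.toFinset ∧ RespectsOrder r S ∧
    listBudget c S = setBudget r c S.toFinset) ∧
  ∀ i j : Fin SS.length, i < j → cbrLE r c (SS.get i).toFinset (SS.get j).toFinset

lemma listBudget_nonneg (c : ι → ℝ) (L : List ι) : 0 ≤ listBudget c L := by
  cases L <;> simp [listBudget]

lemma cost_prefix_le_budget (c : ι → ℝ) : ∀ {P L : List ι}, P <+: L →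
    listCost c P ≤ listBudget c L := by
  intro P L h
  induction L generalizing P with
  | nil => simp [List.prefix_nil.mp h, listCost, listBudget]
  | cons a t ih =>
    rcases P with _ | ⟨b, P'⟩
    · simpa [listCost] using listBudget_nonneg c (a :: t)
    · obtain ⟨rfl, h'⟩ := List.cons_prefix_cons.mp h
      have := ih h'
      simp only [listCost, List.map_cons, List.sum_cons, listBudget] at *
      have h2 : c b + (List.map c P').sum ≤ c b + listBudget c t := by linarith
      exact h2.trans (le_max_right _ _)

lemma budget_le_of_prefix_cost (c : ι → ℝ) : ∀ (L : List ι) (b : ℝ),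
    (∀ P, P <+: L → listCost c P ≤ b) → listBudget c L ≤ b := by
  intro L
  induction L with
  | nil => intro b h; simpa [listCost, listBudget] using h [] (by simp)
  | cons a t ih =>
    intro b h
    have h0 : (0 : ℝ) ≤ b := by simpa [listCost] using h [] (by simp)
    have h1 : listBudget c t ≤ b - c a := by
      apply ih
      intro P hP
      have := h (a :: P) (List.cons_prefix_cons.mpr ⟨rfl, hP⟩)
      simp only [listCost, List.map_cons, List.sum_cons] at this ⊢
      linarith
    simp only [listBudget, max_le_iff]
    constructor
    · exact h0
    · linarith

lemma prefix_filter_exists (p : ι → Bool) : ∀ {L Q : List ι}, Q <+: L.filter p →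
    ∃ P, P <+: L ∧ P.filter p = Q := by
  intro L
  induction L with
  | nil => intro Q h; simp only [List.filter_nil, List.prefix_nil] at h
           exact ⟨[], by simp [h]⟩
  | cons a t ih =>
    intro Q h
    by_cases hp : p a
    · rw [List.filter_cons_of_pos hp] at h
      rcases Q with _ | ⟨b, Q'⟩
      · exact ⟨[], by simp⟩
      · obtain ⟨rfl, h'⟩ := List.cons_prefix_cons.mp h
        obtain ⟨P, hP, hPQ⟩ := ih h'
        exact ⟨b :: P, List.cons_prefix_cons.mpr ⟨rfl, hP⟩,
          by rw [List.filter_cons_of_pos hp, hPQ]⟩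
    · rw [List.filter_cons_of_neg (by simpa using hp)] at h
      obtain ⟨P, hP, hPQ⟩ := ih h
      exact ⟨a :: P, List.cons_prefix_cons.mpr ⟨rfl, hP⟩,
        by rw [List.filter_cons_of_neg (by simpa using hp), hPQ]⟩

lemma filter_indexOf_le (p : ι → Bool) : ∀ {L : List ι}, L.Nodup → ∀ i j,
    i ∈ L.filter p → j ∈ L.filter p → L.idxOf i ≤ L.idxOf j →
    (L.filter p).idxOf i ≤ (L.filter p).idxOf j := by
  intro L
  induction L with
  | nil => simp
  | cons a t ih =>
    intro hnd i j hi hj hle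
    have ha : a ∉ t := (List.nodup_cons.mp hnd).1
    have hnt : t.Nodup := (List.nodup_cons.mp hnd).2
    by_cases hp : p a
    · rw [List.filter_cons_of_pos hp] at hi hj ⊢
      by_cases hia : i = a
      · subst hia; simp [List.idxOf_cons_self]
      · have hit : i ∈ t.filter p := by
          rcases List.mem_cons.mp hi with h | h
          · exact absurd h hia
          · exact h
        by_cases hja : j = a
        · exfalso
          subst hja
          rw [List.idxOf_cons_self] at hle
          rw [List.idxOf_cons_ne t (fun h => hia h.symm)] at hle
          omega
        · have hjt : j ∈ t.filter p := by
            rcases List.mem_cons.mp hj with h | h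
            · exact absurd h hja
            · exact h
          rw [List.idxOf_cons_ne t (fun h => hia h.symm),
              List.idxOf_cons_ne t (fun h => hja h.symm)] at hle
          rw [List.idxOf_cons_ne (t.filter p) (fun h => hia h.symm),
              List.idxOf_cons_ne (t.filter p) (fun h => hja h.symm)]
          exact Nat.succ_le_succ (ih hnt i j hit hjt (Nat.succ_le_succ_iff.mp hle))
    · rw [List.filter_cons_of_neg (by simpa using hp)] at hi hj ⊢
      have hia : i ≠ a := fun h => ha (h ▸ List.mem_of_mem_filter hi)
      have hja : j ≠ a := fun h => ha (h ▸ List.mem_of_mem_filter hj)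
      rw [List.idxOf_cons_ne t (fun h => hia h.symm),
          List.idxOf_cons_ne t (fun h => hja h.symm)] at hle
      exact ih hnt i j hi hj (Nat.succ_le_succ_iff.mp hle)

lemma indexOf_append_of_not_mem {i : ι} : ∀ {P : List ι} (T : List ι), i ∉ P →
    (P ++ T).idxOf i = P.length + T.idxOf i := by
  intro P
  induction P with
  | nil => simp
  | cons a P' ih =>
    intro T hi
    have h1 : i ≠ a := fun h => hi (h ▸ List.mem_cons_self (a := a) (l := P'))
    have h2 : i ∉ P' := fun h => hi (List.mem_cons_of_mem a h)
    rw [List.cons_append, List.idxOf_cons_ne _ (fun h => h1 h.symm), ih T h2,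
      List.length_cons]
    omega

lemma mem_prefix_of_indexOf_lt {P L : List ι} (h : P <+: L) {i : ι} (hi : i ∈ L)
    (hlt : L.idxOf i < P.length) : i ∈ P := by
  obtain ⟨T, rfl⟩ := h
  by_contra hnP
  have hiT : i ∈ T := by
    rcases List.mem_append.mp hi with h' | h'
    · exact absurd h' hnP
    · exact h'
  rw [indexOf_append_of_not_mem T hnP] at hlt
  omega

lemma indexOf_lt_of_mem_prefix {P L : List ι} (h : P <+: L) {i : ι} (hi : i ∈ P) :
    L.idxOf i < P.length := by
  obtain ⟨T, rfl⟩ := h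
  rw [List.idxOf_append_of_mem hi]
  exact List.idxOf_lt_length_iff.mpr hi

theorem ideal_subschedule (r : ι → ι → Prop) (hr : IsPartialOrder ι r)
    (c : ι → ℝ) (N J : Finset ι) (hJ : IsIdealIn r N J)
    (S : List ι) (hS : IsScheduleOf N S) (hSf : RespectsOrder r S) :
    IsScheduleOf J (S.filter (fun j => decide (j ∈ J))) ∧
    RespectsOrder r (S.filter (fun j => decide (j ∈ J))) ∧
    ((∀ K, IsIdealIn r (N \ J) K → 0 ≤ setCost c K) →
      listBudget c (S.filter (fun j => decide (j ∈ J))) ≤ listBudget c S) := by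
  obtain ⟨hnd, hmem⟩ := hS
  set p : ι → Bool := fun j => decide (j ∈ J) with hp
  refine ⟨⟨hnd.filter p, ?_⟩, ?_, ?_⟩
  · intro j
    simp only [List.mem_filter, hp, decide_eq_true_eq, hmem]
    exact ⟨fun h => h.2, fun h => ⟨hJ.1 h, h⟩⟩
  · intro i j hij hi hj
    exact filter_indexOf_le p hnd i j hi hj
      (hSf i j hij (List.mem_of_mem_filter hi) (List.mem_of_mem_filter hj))
  · intro hK
    apply budget_le_of_prefix_cost
    intro Q hQ
    obtain ⟨P, hPS, hPQ⟩ := prefix_filter_exists p hQ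
    have hPnd : P.Nodup := hnd.sublist hPS.sublist
    have hsplit : listCost c Q + listCost c (P.filter (fun x => !p x)) = listCost c P := by
      have := ((List.filter_append_perm p P).map c).sum_eq
      rw [List.map_append, List.sum_append] at this
      simpa [listCost, hPQ] using this
    have hideal : IsIdealIn r (N \ J) (P.filter (fun x => !p x)).toFinset := by
      constructor
      · intro x hx
        simp only [List.mem_toFinset, List.mem_filter, hp, Bool.not_eq_true',
          decide_eq_false_iff_not] at hx
        have hxS : x ∈ S := hPS.sublist.subset hx.1
        exact Finset.mem_sdiff.mpr ⟨(hmem x).mp hxS, hx.2⟩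
      · intro j hj i hi hij
        simp only [List.mem_toFinset, List.mem_filter, hp, Bool.not_eq_true',
          decide_eq_false_iff_not] at hj ⊢
        obtain ⟨hiN, hiJ⟩ := Finset.mem_sdiff.mp hi
        have hiS : i ∈ S := (hmem i).mpr hiN
        have hjS : j ∈ S := hPS.sublist.subset hj.1
        have hle : S.idxOf i ≤ S.idxOf j := hSf i j hij hiS hjS
        have hlt : S.idxOf j < P.length := indexOf_lt_of_mem_prefix hPS hj.1
        exact ⟨mem_prefix_of_indexOf_lt hPS hiS (lt_of_le_of_lt hle hlt), hiJ⟩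
    have hcost : setCost c (P.filter (fun x => !p x)).toFinset =
        listCost c (P.filter (fun x => !p x)) := by
      rw [setCost, List.sum_toFinset c (hPnd.sublist (List.filter_sublist (l := P)))]
      rfl
    have h0 : 0 ≤ listCost c (P.filter (fun x => !p x)) := hcost ▸ hK _ hideal
    have := cost_prefix_le_budget c hPS
    linarith
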